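/- Let T = (T_1, T_2) be a pair of row contractions on H with commuting completely positive maps Φ_1, Φ_2 (where Φ_i(X) = ∑_s T_{i,s} X T_{i,s}*), such that T_1 is pure, i.e. Φ_1^m(1) → 0 strongly as m → ∞. If (id − Φ_1)((id − Φ_2)(1)) ≥ 0, then (id − Φ_2)(1) ≥ 0. -/

import Mathlib

open ContinuousLinearMap Filter

local notation "⟪" x ", " y "⟫" => @inner ℂ _ _ x y

section Aux

variable {H : Type*} [NormedAddCommGroup H] [InnerProductSpace ℂ H] [CompleteSpace H]

lemma phi_pos {n : ℕ} (T : Fin n → H →L[ℂ] H) {X : H →L[ℂ] H} (hX : X.IsPositive) :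
    (∑ s, T s * X * adjoint (T s)).IsPositive := by
  have : ∀ s : Fin n, (T s * X * adjoint (T s)).IsPositive := fun s => by
    exact hX.conj_adjoint (T s)
  classical
  refine Finset.sum_induction _ _ (fun a b ha hb => ha.add hb) isPositive_zero
    (fun s _ => this s)

lemma phi_add {n : ℕ} (T : Fin n → H →L[ℂ] H) (X Y : H →L[ℂ] H) :
    (∑ s, T s * (X + Y) * adjoint (T s)) =
      (∑ s, T s * X * adjoint (T s)) + (∑ s, T s * Y * adjoint (T s)) := by
  rw [← Finset.sum_add_distrib]
  congr 1; ext s x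
  simp [mul_add, add_mul]

lemma phi_smul {n : ℕ} (T : Fin n → H →L[ℂ] H) (c : ℂ) (X : H →L[ℂ] H) :
    (∑ s, T s * (c • X) * adjoint (T s)) = c • ∑ s, T s * X * adjoint (T s) := by
  rw [Finset.smul_sum]
  congr 1; ext s
  simp [mul_smul_comm, smul_mul_assoc]

end Aux

theorem stmt5 {H : Type*} [NormedAddCommGroup H] [InnerProductSpace ℂ H] [CompleteSpace H]
    (n₁ n₂ : ℕ) (T₁ : Fin n₁ → H →L[ℂ] H) (T₂ : Fin n₂ → H →L[ℂ] H)
    (hrow1 : ((1 : H →L[ℂ] H) - ∑ s, T₁ s * adjoint (T₁ s)).IsPositive)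
    (hrow2 : ((1 : H →L[ℂ] H) - ∑ t, T₂ t * adjoint (T₂ t)).IsPositive)
    (hcomm : ∀ X : H →L[ℂ] H,
      (∑ s, T₁ s * (∑ t, T₂ t * X * adjoint (T₂ t)) * adjoint (T₁ s)) =
      (∑ t, T₂ t * (∑ s, T₁ s * X * adjoint (T₁ s)) * adjoint (T₂ t)))
    (hpure : ∀ x : H, Tendsto
      (fun m => ((fun X : H →L[ℂ] H => ∑ s, T₁ s * X * adjoint (T₁ s))^[m] 1) x)
      atTop (nhds 0))
    (hdef : (((1 : H →L[ℂ] H) - ∑ t, T₂ t * adjoint (T₂ t)) -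
        ∑ s, T₁ s * ((1 : H →L[ℂ] H) - ∑ t, T₂ t * adjoint (T₂ t)) * adjoint (T₁ s)).IsPositive) :
    ((1 : H →L[ℂ] H) - ∑ t, T₂ t * adjoint (T₂ t)).IsPositive := by
  classical
  set Φ : (H →L[ℂ] H) → (H →L[ℂ] H) := fun X => ∑ s, T₁ s * X * adjoint (T₁ s) with hΦ
  set Y : H →L[ℂ] H := (1 : H →L[ℂ] H) - ∑ t, T₂ t * adjoint (T₂ t) with hY
  -- Y is self-adjoint
  have hYsa : IsSelfAdjoint Y := by
    have : IsSelfAdjoint ((1 : H →L[ℂ] H) - ∑ t, T₂ t * adjoint (T₂ t)) := by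
      refine IsSelfAdjoint.sub (.one _) ?_
      rw [IsSelfAdjoint, star_sum]
      congr 1; ext t
      simp [star_eq_adjoint, adjoint_comp, mul_def]
    exact this
  -- Φ^[m] Y ≤ Y
  have key : ∀ m : ℕ, (Y - Φ^[m] Y).IsPositive := by
    intro m
    induction m with
    | zero => simpa using isPositive_zero
    | succ m ih =>
      have h1 : (Φ (Y - Φ^[m] Y)).IsPositive := phi_pos T₁ ih
      have h2 : Φ (Y - Φ^[m] Y) = Φ Y - Φ (Φ^[m] Y) := by
        have := phi_add T₁ (Y - Φ^[m] Y) (Φ^[m] Y)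
        simp only [sub_add_cancel] at this
        rw [hΦ]
        simp only [this]
        abel
      rw [h2] at h1
      have h3 : (Y - Φ Y).IsPositive := hdef
      have := h3.add h1
      rw [Function.iterate_succ_apply']
      convert this using 1
      abel
  -- Φ^[m] (c • 1 + Y) positive where c = ‖Y‖
  have hnormpos : (((‖Y‖ : ℂ) • (1 : H →L[ℂ] H)) + Y).IsPositive := by
    refine isPositive_def'.mpr ⟨?_, ?_⟩
    · refine IsSelfAdjoint.add ?_ hYsa
      rw [IsSelfAdjoint, star_smul]
      simp [star_eq_adjoint, Complex.conj_ofReal]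
    · intro x
      rw [reApplyInnerSelf, add_apply, inner_add_left, map_add, smul_apply, ContinuousLinearMap.one_apply,
        inner_smul_left]
      have h1 : RCLike.re ((starRingEnd ℂ) (‖Y‖ : ℂ) * ⟪x, x⟫) = ‖Y‖ * ‖x‖ ^ 2 := by
        simp [Complex.conj_ofReal, inner_self_eq_norm_sq]
        left; norm_cast
      rw [h1]
      have h2 : |RCLike.re ⟪Y x, x⟫| ≤ ‖Y‖ * ‖x‖ ^ 2 := by
        calc |RCLike.re ⟪Y x, x⟫| ≤ ‖(⟪Y x, x⟫ : ℂ)‖ := Complex.abs_re_le_norm _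
          _ ≤ ‖Y x‖ * ‖x‖ := norm_inner_le_norm _ _
          _ ≤ ‖Y‖ * ‖x‖ * ‖x‖ := by
              gcongr; exact le_opNorm Y x
          _ = ‖Y‖ * ‖x‖ ^ 2 := by ring
      nlinarith [abs_le.mp h2]
  have iterpos : ∀ m : ℕ, (((‖Y‖ : ℂ) • (Φ^[m] 1)) + Φ^[m] Y).IsPositive := by
    intro m
    induction m with
    | zero => simpa using hnormpos
    | succ m ih =>
      have h1 : (Φ (((‖Y‖ : ℂ) • (Φ^[m] 1)) + Φ^[m] Y)).IsPositive := phi_pos T₁ ih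
      have h2 : Φ (((‖Y‖ : ℂ) • (Φ^[m] 1)) + Φ^[m] Y)
          = ((‖Y‖ : ℂ) • (Φ (Φ^[m] 1))) + Φ (Φ^[m] Y) := by
        rw [hΦ]
        simp only
        rw [phi_add T₁, phi_smul T₁]
      rw [h2] at h1
      rw [Function.iterate_succ_apply', Function.iterate_succ_apply']
      exact h1
  -- conclude
  refine isPositive_def'.mpr ⟨hYsa, fun x => ?_⟩
  rw [reApplyInnerSelf]
  have hb : ∀ m : ℕ, -(‖Y‖ * RCLike.re ⟪(Φ^[m] 1) x, x⟫) ≤ RCLike.re ⟪Y x, x⟫ := by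
    intro m
    have hk := (key m).re_inner_nonneg_left x
    have hi := (iterpos m).re_inner_nonneg_left x
    rw [sub_apply, inner_sub_left, map_sub] at hk
    rw [add_apply, inner_add_left, map_add, smul_apply, inner_smul_left] at hi
    have : RCLike.re ((starRingEnd ℂ) (‖Y‖ : ℂ) * ⟪(Φ^[m] 1) x, x⟫)
        = ‖Y‖ * RCLike.re ⟪(Φ^[m] 1) x, x⟫ := by
      simp [Complex.conj_ofReal]
    rw [this] at hi
    linarith
  have hlim : Tendsto (fun m => -(‖Y‖ * RCLike.re ⟪(Φ^[m] 1) x, x⟫)) atTop (nhds 0) := by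
    have h0 : Tendsto (fun m => (⟪(Φ^[m] 1) x, x⟫ : ℂ)) atTop (nhds 0) := by
      have := (hpure x)
      have hc : Continuous (fun y : H => (⟪y, x⟫ : ℂ)) := continuous_inner.comp
        (Continuous.prodMk continuous_id continuous_const)
      have h := (hc.tendsto 0).comp this
      simp only [inner_zero_left] at h
      exact h
    have := (Complex.continuous_re.tendsto 0).comp h0
    simpa using (this.const_mul ‖Y‖).neg
  exact le_of_tendsto hlim (Eventually.of_forall hb)
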